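/- Let A, B, C, p, q, r, λ, μ, α ∈ ℂ. In ℂ[u,v], the ideal (v − (A·u² + B·u + C), u³ + p·u² + q·u + r) is contained in the ideal (v − λ·u − μ, (u − α)²) if and only if B = λ − 2Aα, C = μ + Aα², q = −3α² − 2pα, and r = −α³ − pα² − qα. -/
import Mathlib


open MvPolynomial

open DualNumber TrivSqZeroExt in
noncomputable def phiAux (lam mu al : ℂ) : MvPolynomial (Fin 2) ℂ →ₐ[ℂ] DualNumber ℂ :=
  aeval ![inl al + ε, inl (lam * al + mu) + inl lam * ε]

open DualNumber TrivSqZeroExt in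
/-- In `ℂ[u,v]` (with `u = X 0`, `v = X 1`), the ideal
`(v − (A·u² + B·u + C), u³ + p·u² + q·u + r)` is contained in the ideal
`(v − λ·u − μ, (u − α)²)` if and only if `B = λ − 2Aα`, `C = μ + Aα²`,
`q = −3α² − 2pα`, and `r = −α³ − pα² − qα`. -/
theorem ideal_span_le_iff_coeffs (A B C' p q r lam mu al : ℂ) :
    Ideal.span
        {(X 1 : MvPolynomial (Fin 2) ℂ) -
            (MvPolynomial.C A * X 0 ^ 2 + MvPolynomial.C B * X 0 + MvPolynomial.C C'),
          X 0 ^ 3 + MvPolynomial.C p * X 0 ^ 2 + MvPolynomial.C q * X 0 + MvPolynomial.C r}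
      ≤ Ideal.span
          {(X 1 : MvPolynomial (Fin 2) ℂ) - (MvPolynomial.C lam * X 0 + MvPolynomial.C mu),
            (X 0 - MvPolynomial.C al) ^ 2}
    ↔ (B = lam - 2 * A * al ∧ C' = mu + A * al ^ 2 ∧
        q = -3 * al ^ 2 - 2 * p * al ∧ r = -al ^ 3 - p * al ^ 2 - q * al) := by
  constructor
  · intro h
    have hker : Ideal.span
        {(X 1 : MvPolynomial (Fin 2) ℂ) - (MvPolynomial.C lam * X 0 + MvPolynomial.C mu),
          (X 0 - MvPolynomial.C al) ^ 2} ≤ RingHom.ker (phiAux lam mu al).toRingHom := by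
      rw [Ideal.span_le]
      rintro f (rfl | rfl)
      · show phiAux lam mu al _ = 0
        simp only [phiAux, map_sub, map_add, map_mul, aeval_X, algebraMap_eq_inl', aeval_C,
          Matrix.cons_val_zero, Matrix.cons_val_one, Matrix.head_cons]
        ext <;> simp
      · show phiAux lam mu al _ = 0
        simp only [phiAux, map_sub, map_add, map_mul, map_pow, aeval_X, algebraMap_eq_inl',
          aeval_C, Matrix.cons_val_zero, Matrix.cons_val_one, Matrix.head_cons]
        ext <;> simp
    have h1 : phiAux lam mu al ((X 1 : MvPolynomial (Fin 2) ℂ) -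
        (MvPolynomial.C A * X 0 ^ 2 + MvPolynomial.C B * X 0 + MvPolynomial.C C')) = 0 :=
      hker (h (Ideal.subset_span (Set.mem_insert _ _)))
    have h2 : phiAux lam mu al (X 0 ^ 3 + MvPolynomial.C p * X 0 ^ 2 + MvPolynomial.C q * X 0
        + MvPolynomial.C r) = 0 :=
      hker (h (Ideal.subset_span (Set.mem_insert_of_mem _ rfl)))
    simp only [phiAux, map_sub, map_add, map_mul, map_pow, aeval_X, algebraMap_eq_inl', aeval_C,
      Matrix.cons_val_zero, Matrix.cons_val_one, Matrix.head_cons] at h1 h2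
    have h1f := congrArg fst h1
    have h1s := congrArg snd h1
    have h2f := congrArg fst h2
    have h2s := congrArg snd h2
    simp at h1f h1s h2f h2s
    refine ⟨by linear_combination -h1s, by linear_combination al * h1s - h1f, ?_, ?_⟩
    · linear_combination h2s
    · linear_combination h2f
  · rintro ⟨rfl, rfl, rfl, rfl⟩
    rw [Ideal.span_le]
    rintro f (rfl | rfl)
    · rw [SetLike.mem_coe, Ideal.mem_span_pair]
      refine ⟨1, -MvPolynomial.C A, ?_⟩
      simp only [map_sub, map_add, map_mul, map_pow, map_neg, map_ofNat, map_one]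
      ring
    · rw [SetLike.mem_coe, Ideal.mem_span_pair]
      refine ⟨0, X 0 + MvPolynomial.C (2 * al + p), ?_⟩
      simp only [map_sub, map_add, map_mul, map_pow, map_neg, map_ofNat, map_one]
      ring
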